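/- arXiv:2011.08986 — 2 statements merged into one kernel-verified Lean document; each statement's English description precedes it below -/
import Mathlib

section
/- Let (μ,σ) be an SDE on an open set M ⊆ ℝⁿ and let V₁ = (Y₁,C₁,τ₁,H₁) and V₂ = (Y₂,C₂,τ₂,H₂) be infinitesimal symmetries of (μ,σ) (i.e. satisfying the determining equations) of quasi Doob type, meaning H_i = σᵀ·∇k_i for smooth functions k₁, k₂: M → ℝ. Then the fourth component of the bracket [V₁,V₂], namely H = Y₁(H₂) − Y₂(H₁) − (−τ₁/2 + C₁)·H₂ + (−τ₂/2 + C₂)·H₁, satisfies H = σᵀ·∇( Y₁(k₂) − Y₂(k₁) ). In particular the bracket of two quasi Doob symmetries is a quasi Doob symmetry. -/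
open Matrix

/-- Partial derivative `∂ᵢ f` of a scalar function on `ℝⁿ`. -/
noncomputable def pd {n : ℕ} (i : Fin n) (f : (Fin n → ℝ) → ℝ) (x : Fin n → ℝ) : ℝ :=
  fderiv ℝ f x (Pi.single i 1)

/-- Action `Y(f) = Yⁱ ∂ᵢ f` of a vector field on a scalar function. -/
noncomputable def vfd {n : ℕ} (Y : (Fin n → ℝ) → Fin n → ℝ)
    (f : (Fin n → ℝ) → ℝ) (x : Fin n → ℝ) : ℝ :=
  ∑ j, Y x j * pd j f x

/-- Infinitesimal generator `L(f) = ½ (σσᵀ)^{ij} ∂ᵢ∂ⱼ f + μⁱ ∂ᵢ f` of the SDE `(μ,σ)`. -/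
noncomputable def gen {n m : ℕ} (μ : (Fin n → ℝ) → Fin n → ℝ)
    (σ : (Fin n → ℝ) → Matrix (Fin n) (Fin m) ℝ)
    (f : (Fin n → ℝ) → ℝ) (x : Fin n → ℝ) : ℝ :=
  (1 / 2) * ∑ i, ∑ j, (∑ α, σ x i α * σ x j α) * pd i (pd j f) x
    + ∑ i, μ x i * pd i f x

/-- Entrywise smoothness of a vector-valued function on a set. -/
def SmoothVec {n k : ℕ} (M : Set (Fin n → ℝ)) (f : (Fin n → ℝ) → Fin k → ℝ) : Prop :=
  ∀ i, ContDiffOn ℝ (⊤ : ℕ∞) (fun x => f x i) M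

/-- Entrywise smoothness of a matrix-valued function on a set. -/
def SmoothMat {n k l : ℕ} (M : Set (Fin n → ℝ))
    (f : (Fin n → ℝ) → Matrix (Fin k) (Fin l) ℝ) : Prop :=
  ∀ i j, ContDiffOn ℝ (⊤ : ℕ∞) (fun x => f x i j) M

/-- The determining equations: `V = (Y,C,τ,H)` is an infinitesimal symmetry of the SDE
`(μ,σ)` on `M`, i.e. `Y(μ) − L(Y) − σ·H + τμ = 0` and `[Y,σ] + ½τσ + σ·C = 0` on `M`. -/
def DetEqs {n m : ℕ} (M : Set (Fin n → ℝ))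
    (μ : (Fin n → ℝ) → Fin n → ℝ) (σ : (Fin n → ℝ) → Matrix (Fin n) (Fin m) ℝ)
    (Y : (Fin n → ℝ) → Fin n → ℝ) (C : (Fin n → ℝ) → Matrix (Fin m) (Fin m) ℝ)
    (τ : (Fin n → ℝ) → ℝ) (H : (Fin n → ℝ) → Fin m → ℝ) : Prop :=
  (∀ x ∈ M, ∀ i, vfd Y (fun y => μ y i) x - gen μ σ (fun y => Y y i) x
      - (∑ α, σ x i α * H x α) + τ x * μ x i = 0) ∧
  (∀ x ∈ M, ∀ i, ∀ α, vfd Y (fun y => σ y i α) x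
      - (∑ j, σ x j α * pd j (fun y => Y y i) x)
      + (1 / 2) * τ x * σ x i α + (∑ β, σ x i β * C x β α) = 0)

/-- First component (`Y`-part) of the bracket of two infinitesimal stochastic
transformations: `[Y₁,Y₂]`. -/
noncomputable def brY {n : ℕ} (Y₁ Y₂ : (Fin n → ℝ) → Fin n → ℝ) (x : Fin n → ℝ) :
    Fin n → ℝ := fun i =>
  vfd Y₁ (fun y => Y₂ y i) x - vfd Y₂ (fun y => Y₁ y i) x

/-- Second component (`C`-part) of the bracket: `Y₁(C₂) − Y₂(C₁) − (C₁C₂ − C₂C₁)`. -/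
noncomputable def brC {n m : ℕ} (Y₁ Y₂ : (Fin n → ℝ) → Fin n → ℝ)
    (C₁ C₂ : (Fin n → ℝ) → Matrix (Fin m) (Fin m) ℝ) (x : Fin n → ℝ) :
    Matrix (Fin m) (Fin m) ℝ :=
  Matrix.of fun a b =>
    vfd Y₁ (fun y => C₂ y a b) x - vfd Y₂ (fun y => C₁ y a b) x
      - ((C₁ x * C₂ x) a b - (C₂ x * C₁ x) a b)

/-- Third component (`τ`-part) of the bracket: `Y₁(τ₂) − Y₂(τ₁)`. -/
noncomputable def brTau {n : ℕ} (Y₁ Y₂ : (Fin n → ℝ) → Fin n → ℝ)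
    (τ₁ τ₂ : (Fin n → ℝ) → ℝ) (x : Fin n → ℝ) : ℝ :=
  vfd Y₁ τ₂ x - vfd Y₂ τ₁ x

/-- Fourth component (`H`-part) of the bracket:
`Y₁(H₂) − Y₂(H₁) − (−τ₁/2 + C₁)·H₂ + (−τ₂/2 + C₂)·H₁`. -/
noncomputable def brH {n m : ℕ} (Y₁ Y₂ : (Fin n → ℝ) → Fin n → ℝ)
    (C₁ C₂ : (Fin n → ℝ) → Matrix (Fin m) (Fin m) ℝ)
    (τ₁ τ₂ : (Fin n → ℝ) → ℝ)
    (H₁ H₂ : (Fin n → ℝ) → Fin m → ℝ) (x : Fin n → ℝ) : Fin m → ℝ := fun a =>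
  vfd Y₁ (fun y => H₂ y a) x - vfd Y₂ (fun y => H₁ y a) x
    - ((-(τ₁ x) / 2) * H₂ x a + ∑ b, C₁ x a b * H₂ x b)
    + ((-(τ₂ x) / 2) * H₁ x a + ∑ b, C₂ x a b * H₁ x b)

section helpers
variable {n : ℕ} {x : Fin n → ℝ}

lemma pd_sub {f g : (Fin n → ℝ) → ℝ} (hf : DifferentiableAt ℝ f x)
    (hg : DifferentiableAt ℝ g x) (i : Fin n) :
    pd i (fun y => f y - g y) x = pd i f x - pd i g x := by
  unfold pd; rw [fderiv_fun_sub hf hg]; simp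

lemma pd_mul {f g : (Fin n → ℝ) → ℝ} (hf : DifferentiableAt ℝ f x)
    (hg : DifferentiableAt ℝ g x) (i : Fin n) :
    pd i (fun y => f y * g y) x = pd i f x * g x + f x * pd i g x := by
  unfold pd; rw [fderiv_fun_mul hf hg]; simp; ring

lemma pd_sum {ι : Type*} (s : Finset ι) {A : ι → (Fin n → ℝ) → ℝ}
    (h : ∀ i ∈ s, DifferentiableAt ℝ (A i) x) (j : Fin n) :
    pd j (fun y => ∑ i ∈ s, A i y) x = ∑ i ∈ s, pd j (A i) x := by
  unfold pd; rw [fderiv_fun_sum h]; simp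

lemma diffAt_pd {f : (Fin n → ℝ) → ℝ} (hf : ContDiffAt ℝ 2 f x) (p : Fin n) :
    DifferentiableAt ℝ (fun y => pd p f y) x := by
  have h1 : ContDiffAt ℝ 1 (fderiv ℝ f) x := hf.fderiv_right (by norm_num)
  exact (h1.differentiableAt one_ne_zero).clm_apply (differentiableAt_const _)

lemma pd_comm {f : (Fin n → ℝ) → ℝ} (hf : ContDiffAt ℝ 2 f x) (i j : Fin n) :
    pd i (pd j f) x = pd j (pd i f) x := by
  have hsymm := hf.isSymmSndFDerivAt (by simp [minSmoothness_of_isRCLikeNormedField])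
  have hd : DifferentiableAt ℝ (fderiv ℝ f) x :=
    (hf.fderiv_right (m := 1) (by norm_num)).differentiableAt one_ne_zero
  unfold pd
  rw [fderiv_clm_apply hd (differentiableAt_const _),
      fderiv_clm_apply hd (differentiableAt_const _)]
  simp [hsymm.eq]

lemma two_le_top : (2 : WithTop ℕ∞) ≤ ((⊤ : ℕ∞) : WithTop ℕ∞) := by
  norm_cast

lemma one_le_top : (1 : WithTop ℕ∞) ≤ ((⊤ : ℕ∞) : WithTop ℕ∞) := by
  norm_cast

end helpers

lemma key {n m : ℕ} {M : Set (Fin n → ℝ)} (hM : IsOpen M)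
    {σ : (Fin n → ℝ) → Matrix (Fin n) (Fin m) ℝ} (hσ : SmoothMat M σ)
    {Y : (Fin n → ℝ) → Fin n → ℝ} (hY : SmoothVec M Y)
    {C : (Fin n → ℝ) → Matrix (Fin m) (Fin m) ℝ} {τ : (Fin n → ℝ) → ℝ}
    {k : (Fin n → ℝ) → ℝ} (hk : ContDiffOn ℝ (⊤ : ℕ∞) k M)
    (heq : ∀ x ∈ M, ∀ i, ∀ α, vfd Y (fun y => σ y i α) x
      - (∑ j, σ x j α * pd j (fun y => Y y i) x)
      + (1 / 2) * τ x * σ x i α + (∑ β, σ x i β * C x β α) = 0)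
    (hC : ∀ x ∈ M, (C x)ᵀ = -(C x))
    {x : Fin n → ℝ} (hx : x ∈ M) (α : Fin m) :
    vfd Y (fun y => ∑ p, σ y p α * pd p k y) x
      - ((-(τ x) / 2) * (∑ p, σ x p α * pd p k x)
        + ∑ b, C x α b * (∑ p, σ x p b * pd p k x))
      = ∑ p, σ x p α * pd p (fun y => vfd Y k y) x := by
  have hnx : M ∈ nhds x := hM.mem_nhds hx
  have hkx : ContDiffAt ℝ 2 k x := (hk.contDiffAt hnx).of_le two_le_top
  have hσx : ∀ p b, DifferentiableAt ℝ (fun y => σ y p b) x := fun p b =>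
    ((hσ p b).contDiffAt hnx).differentiableAt (by simp)
  have hYx : ∀ j, DifferentiableAt ℝ (fun y => Y y j) x := fun j =>
    ((hY j).contDiffAt hnx).differentiableAt (by simp)
  have hpk : ∀ p, DifferentiableAt ℝ (fun y => pd p k y) x := diffAt_pd hkx
  -- expand LHS vfd
  have stepA : ∀ j, pd j (fun y => ∑ p, σ y p α * pd p k y) x
      = ∑ p, (pd j (fun y => σ y p α) x * pd p k x + σ x p α * pd j (pd p k) x) := by
    intro j
    rw [pd_sum _ (fun p _ => (hσx p α).fun_mul (hpk p))]
    exact Finset.sum_congr rfl fun p _ => pd_mul (hσx p α) (hpk p) j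
  have stepB : ∀ p, pd p (fun y => vfd Y k y) x
      = ∑ j, (pd p (fun y => Y y j) x * pd j k x + Y x j * pd p (pd j k) x) := by
    intro p
    simp only [vfd]
    rw [pd_sum _ (fun j _ => (hYx j).fun_mul (hpk j))]
    exact Finset.sum_congr rfl fun j _ => pd_mul (hYx j) (hpk j) p
  have expand1 : vfd Y (fun y => ∑ p, σ y p α * pd p k y) x
      = (∑ p, vfd Y (fun y => σ y p α) x * pd p k x)
        + ∑ p, ∑ j, Y x j * σ x p α * pd j (pd p k) x := by
    simp only [vfd]
    calc ∑ j, Y x j * pd j (fun y => ∑ p, σ y p α * pd p k y) x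
        = ∑ j, ∑ p, (Y x j * pd j (fun y => σ y p α) x * pd p k x
            + Y x j * σ x p α * pd j (pd p k) x) := by
          refine Finset.sum_congr rfl fun j _ => ?_
          rw [stepA j, Finset.mul_sum]
          exact Finset.sum_congr rfl fun p _ => by ring
      _ = ∑ p, ∑ j, (Y x j * pd j (fun y => σ y p α) x * pd p k x
            + Y x j * σ x p α * pd j (pd p k) x) := Finset.sum_comm
      _ = (∑ p, (∑ j, Y x j * pd j (fun y => σ y p α) x) * pd p k x)
            + ∑ p, ∑ j, Y x j * σ x p α * pd j (pd p k) x := by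
          rw [← Finset.sum_add_distrib]
          refine Finset.sum_congr rfl fun p _ => ?_
          rw [Finset.sum_add_distrib, Finset.sum_mul]
  have expand2 : ∑ p, σ x p α * pd p (fun y => vfd Y k y) x
      = (∑ p, ∑ j, σ x p α * pd p (fun y => Y y j) x * pd j k x)
        + ∑ p, ∑ j, σ x p α * Y x j * pd p (pd j k) x := by
    calc ∑ p, σ x p α * pd p (fun y => vfd Y k y) x
        = ∑ p, ∑ j, (σ x p α * pd p (fun y => Y y j) x * pd j k x
            + σ x p α * Y x j * pd p (pd j k) x) := by
          refine Finset.sum_congr rfl fun p _ => ?_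
          rw [stepB p, Finset.mul_sum]
          exact Finset.sum_congr rfl fun j _ => by ring
      _ = _ := by
          rw [← Finset.sum_add_distrib]
          exact Finset.sum_congr rfl fun p _ => Finset.sum_add_distrib
  -- second derivative terms agree
  have hsecond : ∑ p, ∑ j, Y x j * σ x p α * pd j (pd p k) x
      = ∑ p, ∑ j, σ x p α * Y x j * pd p (pd j k) x := by
    refine Finset.sum_congr rfl fun p _ => Finset.sum_congr rfl fun j _ => ?_
    rw [pd_comm hkx j p]; ring
  -- first derivative terms via determining equation
  have hfirst : ∑ p, vfd Y (fun y => σ y p α) x * pd p k x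
      = (∑ p, ∑ j, σ x p α * pd p (fun y => Y y j) x * pd j k x)
        + ((-(τ x) / 2) * (∑ p, σ x p α * pd p k x)
          + ∑ b, C x α b * (∑ p, σ x p b * pd p k x)) := by
    have hCab : ∀ a b, C x b a = -C x a b := by
      intro a b
      have := congrFun (congrFun (hC x hx) a) b
      simpa [Matrix.transpose_apply, Matrix.neg_apply] using this
    have hAp : ∀ p, vfd Y (fun y => σ y p α) x
        = (∑ j, σ x j α * pd j (fun y => Y y p) x)
          - (1 / 2) * τ x * σ x p α - ∑ β, σ x p β * C x β α := by
      intro p; have := heq x hx p α; linarith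
    calc ∑ p, vfd Y (fun y => σ y p α) x * pd p k x
        = ∑ p, ((∑ j, σ x j α * pd j (fun y => Y y p) x) * pd p k x
            - (1 / 2) * τ x * σ x p α * pd p k x
            - (∑ β, σ x p β * C x β α) * pd p k x) := by
          refine Finset.sum_congr rfl fun p _ => ?_
          rw [hAp p]; ring
      _ = (∑ p, (∑ j, σ x j α * pd j (fun y => Y y p) x) * pd p k x)
            - (∑ p, (1 / 2) * τ x * σ x p α * pd p k x)
            - ∑ p, (∑ β, σ x p β * C x β α) * pd p k x := by
          rw [Finset.sum_sub_distrib, Finset.sum_sub_distrib]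
      _ = _ := by
          have e1 : ∑ p, (∑ j, σ x j α * pd j (fun y => Y y p) x) * pd p k x
              = ∑ p, ∑ j, σ x p α * pd p (fun y => Y y j) x * pd j k x := by
            rw [Finset.sum_comm (f := fun p j => σ x p α * pd p (fun y => Y y j) x * pd j k x)]
            exact Finset.sum_congr rfl fun p _ => Finset.sum_mul ..
          have e2 : ∑ p, (1 / 2) * τ x * σ x p α * pd p k x
              = -((-(τ x) / 2) * ∑ p, σ x p α * pd p k x) := by
            rw [Finset.mul_sum, ← Finset.sum_neg_distrib]
            exact Finset.sum_congr rfl fun p _ => by ring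
          have e3 : ∑ p, (∑ β, σ x p β * C x β α) * pd p k x
              = -∑ b, C x α b * (∑ p, σ x p b * pd p k x) := by
            calc ∑ p, (∑ β, σ x p β * C x β α) * pd p k x
                = ∑ p, ∑ β, C x β α * (σ x p β * pd p k x) := by
                  refine Finset.sum_congr rfl fun p _ => ?_
                  rw [Finset.sum_mul]
                  exact Finset.sum_congr rfl fun β _ => by ring
              _ = ∑ β, ∑ p, C x β α * (σ x p β * pd p k x) := Finset.sum_comm
              _ = ∑ β, C x β α * ∑ p, σ x p β * pd p k x := by
                  exact Finset.sum_congr rfl fun β _ => (Finset.mul_sum ..).symm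
              _ = -∑ b, C x α b * (∑ p, σ x p b * pd p k x) := by
                  rw [← Finset.sum_neg_distrib]
                  refine Finset.sum_congr rfl fun b _ => ?_
                  rw [hCab α b]; ring
          rw [e1, e2, e3]; ring
  linarith [expand1, expand2, hsecond, hfirst]

/-- The `H`-component of the bracket of two quasi Doob symmetries `V_i = (Y_i,C_i,τ_i,σᵀ∇k_i)`
of `(μ,σ)` equals `σᵀ·∇(Y₁(k₂) − Y₂(k₁))`; in particular the bracket of two quasi Doob
symmetries is a quasi Doob symmetry. -/
theorem statement10 {n m : ℕ} (M : Set (Fin n → ℝ)) (hM : IsOpen M)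
    (μ : (Fin n → ℝ) → Fin n → ℝ) (σ : (Fin n → ℝ) → Matrix (Fin n) (Fin m) ℝ)
    (hμ : SmoothVec M μ) (hσ : SmoothMat M σ)
    (Y₁ Y₂ : (Fin n → ℝ) → Fin n → ℝ)
    (C₁ C₂ : (Fin n → ℝ) → Matrix (Fin m) (Fin m) ℝ)
    (τ₁ τ₂ : (Fin n → ℝ) → ℝ) (k₁ k₂ : (Fin n → ℝ) → ℝ)
    (hY₁ : SmoothVec M Y₁) (hY₂ : SmoothVec M Y₂)
    (hC₁s : SmoothMat M C₁) (hC₂s : SmoothMat M C₂)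
    (hτ₁ : ContDiffOn ℝ (⊤ : ℕ∞) τ₁ M) (hτ₂ : ContDiffOn ℝ (⊤ : ℕ∞) τ₂ M)
    (hk₁ : ContDiffOn ℝ (⊤ : ℕ∞) k₁ M) (hk₂ : ContDiffOn ℝ (⊤ : ℕ∞) k₂ M)
    (hC₁ : ∀ x ∈ M, (C₁ x)ᵀ = -(C₁ x)) (hC₂ : ∀ x ∈ M, (C₂ x)ᵀ = -(C₂ x))
    (hsym₁ : DetEqs M μ σ Y₁ C₁ τ₁ (fun x α => ∑ p, σ x p α * pd p k₁ x))
    (hsym₂ : DetEqs M μ σ Y₂ C₂ τ₂ (fun x α => ∑ p, σ x p α * pd p k₂ x)) :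
    ∀ x ∈ M, ∀ α,
      brH Y₁ Y₂ C₁ C₂ τ₁ τ₂ (fun y β => ∑ p, σ y p β * pd p k₁ y)
          (fun y β => ∑ p, σ y p β * pd p k₂ y) x α =
        ∑ p, σ x p α * pd p (fun y => vfd Y₁ k₂ y - vfd Y₂ k₁ y) x := by
  intro x hx α
  have hnx : M ∈ nhds x := hM.mem_nhds hx
  have hk₁x : ContDiffAt ℝ 2 k₁ x := (hk₁.contDiffAt hnx).of_le two_le_top
  have hk₂x : ContDiffAt ℝ 2 k₂ x := (hk₂.contDiffAt hnx).of_le two_le_top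
  have hY₁x : ∀ j, DifferentiableAt ℝ (fun y => Y₁ y j) x := fun j =>
    ((hY₁ j).contDiffAt hnx).differentiableAt (by simp)
  have hY₂x : ∀ j, DifferentiableAt ℝ (fun y => Y₂ y j) x := fun j =>
    ((hY₂ j).contDiffAt hnx).differentiableAt (by simp)
  have d1 : DifferentiableAt ℝ (fun y => vfd Y₁ k₂ y) x := by
    simp only [vfd]
    exact DifferentiableAt.fun_sum fun j _ => (hY₁x j).fun_mul (diffAt_pd hk₂x j)
  have d2 : DifferentiableAt ℝ (fun y => vfd Y₂ k₁ y) x := by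
    simp only [vfd]
    exact DifferentiableAt.fun_sum fun j _ => (hY₂x j).fun_mul (diffAt_pd hk₁x j)
  have key₁ := key hM hσ hY₁ hk₂ hsym₁.2 hC₁ hx α
  have key₂ := key hM hσ hY₂ hk₁ hsym₂.2 hC₂ hx α
  have hsplit : ∑ p, σ x p α * pd p (fun y => vfd Y₁ k₂ y - vfd Y₂ k₁ y) x
      = (∑ p, σ x p α * pd p (fun y => vfd Y₁ k₂ y) x)
        - ∑ p, σ x p α * pd p (fun y => vfd Y₂ k₁ y) x := by
    rw [← Finset.sum_sub_distrib]
    refine Finset.sum_congr rfl fun p _ => ?_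
    rw [pd_sub d1 d2 p, mul_sub]
  simp only [brH]
  linarith [key₁, key₂, hsplit]
end

section
/- Consider the Cox-Ingersoll-Ross SDE on M = {(x,z) ∈ ℝ² : x > 0} with m = 1 driving noise, coefficients μ(x,z) = (ax + b, 1) and σ(x,z) = (σ₀√x, 0)ᵀ, where a, b, σ₀ ∈ ℝ with σ₀ ≠ 0. For every k ∈ ℝ, the infinitesimal stochastic transformations V₁ = (Y₁, 0, 0, H₁) with Y₁(x,z) = (e^{−kz}√x, 0) and H₁(x,z) = e^{−kz}[ (a+2k)/(2σ₀) + (σ₀² − 4b)/(8σ₀x) ], and V₂ = (Y₂, 0, 0, 0) with Y₂(x,z) = (0,1), are infinitesimal symmetries of (μ,σ), i.e. they satisfy the determining equations; moreover [V₁,V₂] = k·V₁, so span_ℝ{V₁,V₂} is a two-dimensional solvable Lie algebra of quasi Doob symmetries. -/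
open Matrix

/-- The domain `M = {(x,z) : x > 0}` of the CIR model. -/
def Mcir : Set (Fin 2 → ℝ) := {p | 0 < p 0}

/-- The drift `μ(x,z) = (ax + b, 1)` of the CIR model. -/
noncomputable def μcir (a b : ℝ) : (Fin 2 → ℝ) → Fin 2 → ℝ :=
  fun p => ![a * p 0 + b, 1]

/-- The diffusion coefficient `σ(x,z) = (σ₀√x, 0)ᵀ` of the CIR model. -/
noncomputable def σcir (σ₀ : ℝ) : (Fin 2 → ℝ) → Matrix (Fin 2) (Fin 1) ℝ :=
  fun p => Matrix.of fun i _ => ![σ₀ * Real.sqrt (p 0), 0] i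

/-- The vector field `Y₁(x,z) = (e^{−kz}√x, 0)`. -/
noncomputable def Y1cir (k : ℝ) : (Fin 2 → ℝ) → Fin 2 → ℝ :=
  fun p => ![Real.exp (-k * p 1) * Real.sqrt (p 0), 0]

/-- The Girsanov component `H₁(x,z) = e^{−kz}[(a+2k)/(2σ₀) + (σ₀²−4b)/(8σ₀x)]`. -/
noncomputable def H1cir (a b σ₀ k : ℝ) : (Fin 2 → ℝ) → Fin 1 → ℝ :=
  fun p _ => Real.exp (-k * p 1) *
    ((a + 2 * k) / (2 * σ₀) + (σ₀ ^ 2 - 4 * b) / (8 * σ₀ * p 0))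

/-- The vector field `Y₂(x,z) = (0,1)`. -/
noncomputable def Y2cir : (Fin 2 → ℝ) → Fin 2 → ℝ := fun _ => ![0, 1]


/-! ### Auxiliary lemmas for statement19 -/

lemma pd_const_fun {n : ℕ} (i : Fin n) (c : ℝ) :
    pd i (fun _ : Fin n → ℝ => c) = fun _ => 0 :=
  funext fun x => by simp [pd]

lemma pd_congr' {n : ℕ} {f₁ f₂ : (Fin n → ℝ) → ℝ} {p : Fin n → ℝ} (i : Fin n)
    (h : f₁ =ᶠ[nhds p] f₂) : pd i f₁ p = pd i f₂ p := by
  rw [pd, pd, h.fderiv_eq]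

lemma hasF0cir (g : ℝ → ℝ) (g' : ℝ) (p : Fin 2 → ℝ) (hg : HasDerivAt g g' (p 0)) :
    HasFDerivAt (fun q : Fin 2 → ℝ => g (q 0))
      ((ContinuousLinearMap.smulRight (1 : ℝ →L[ℝ] ℝ) g').comp
        (ContinuousLinearMap.proj 0)) p :=
  hg.hasFDerivAt.comp p
    ((ContinuousLinearMap.proj (R := ℝ) (φ := fun _ : Fin 2 => ℝ) 0).hasFDerivAt (x := p))

lemma hasF1cir (h : ℝ → ℝ) (h' : ℝ) (p : Fin 2 → ℝ) (hh : HasDerivAt h h' (p 1)) :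
    HasFDerivAt (fun q : Fin 2 → ℝ => h (q 1))
      ((ContinuousLinearMap.smulRight (1 : ℝ →L[ℝ] ℝ) h').comp
        (ContinuousLinearMap.proj 1)) p :=
  hh.hasFDerivAt.comp p
    ((ContinuousLinearMap.proj (R := ℝ) (φ := fun _ : Fin 2 => ℝ) 1).hasFDerivAt (x := p))

lemma pd_mul10 (g h : ℝ → ℝ) (g' h' : ℝ) (p : Fin 2 → ℝ)
    (hg : HasDerivAt g g' (p 0)) (hh : HasDerivAt h h' (p 1)) :
    pd 0 (fun q => h (q 1) * g (q 0)) p = h (p 1) * g' ∧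
    pd 1 (fun q => h (q 1) * g (q 0)) p = h' * g (p 0) := by
  have H : HasFDerivAt (fun q => h (q 1) * g (q 0)) _ p :=
    (hasF1cir h h' p hh).mul (hasF0cir g g' p hg)
  constructor <;> (rw [pd, H.fderiv]; simp [Pi.single_apply]; try ring)

lemma pd_f0 (g : ℝ → ℝ) (g' : ℝ) (p : Fin 2 → ℝ) (hg : HasDerivAt g g' (p 0)) :
    pd 0 (fun q => g (q 0)) p = g' ∧ pd 1 (fun q => g (q 0)) p = 0 := by
  have H := hasF0cir g g' p hg
  constructor <;> (rw [pd, H.fderiv]; simp [Pi.single_apply])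

lemma hEcir (k z : ℝ) : HasDerivAt (fun z => Real.exp (-k * z)) (Real.exp (-k * z) * -k) z := by
  simpa using ((hasDerivAt_id z).const_mul (-k)).exp

lemma isOpen_Mcir : IsOpen Mcir :=
  isOpen_Ioi.preimage (continuous_apply 0)

lemma pdY1 (k : ℝ) (x : Fin 2 → ℝ) (hx : x ∈ Mcir) :
    pd 0 (fun y => Real.exp (-k * y 1) * Real.sqrt (y 0)) x
      = Real.exp (-k * x 1) * (1 / (2 * Real.sqrt (x 0))) ∧
    pd 1 (fun y => Real.exp (-k * y 1) * Real.sqrt (y 0)) x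
      = Real.exp (-k * x 1) * -k * Real.sqrt (x 0) := by
  exact pd_mul10 Real.sqrt (fun z => Real.exp (-k * z)) _ _ x
    (Real.hasDerivAt_sqrt (ne_of_gt hx)) (hEcir k (x 1))

lemma pdpdY1 (k : ℝ) (x : Fin 2 → ℝ) (hx : x ∈ Mcir) :
    pd 0 (pd 0 fun y => Real.exp (-k * y 1) * Real.sqrt (y 0)) x
      = Real.exp (-k * x 1) *
        ((0 * (2 * Real.sqrt (x 0)) - 1 * (2 * (1 / (2 * Real.sqrt (x 0)))))
          / (2 * Real.sqrt (x 0)) ^ 2) := by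
  have hev : (pd 0 fun y => Real.exp (-k * y 1) * Real.sqrt (y 0))
      =ᶠ[nhds x] fun q => Real.exp (-k * q 1) * (1 / (2 * Real.sqrt (q 0))) := by
    filter_upwards [isOpen_Mcir.mem_nhds hx] with q hq
    exact (pdY1 k q hq).1
  rw [pd_congr' 0 hev]
  have h2 : (2 : ℝ) * Real.sqrt (x 0) ≠ 0 := by
    have := Real.sqrt_pos.2 (show 0 < x 0 from hx); positivity
  exact (pd_mul10 (fun u => 1 / (2 * Real.sqrt u)) (fun z => Real.exp (-k * z)) _ _ x
    ((hasDerivAt_const (x 0) (1:ℝ)).div ((Real.hasDerivAt_sqrt (ne_of_gt hx)).const_mul 2) h2)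
    (hEcir k (x 1))).1

/-- For every `k ∈ ℝ`, `V₁ = (Y₁,0,0,H₁)` and `V₂ = (Y₂,0,0,0)` are infinitesimal symmetries
of the CIR model; moreover `[V₁,V₂] = k·V₁`, `V₁` is of quasi Doob type and `V₁, V₂` are
linearly independent, so `span{V₁,V₂}` is a two-dimensional solvable Lie algebra of quasi
Doob symmetries. -/
theorem statement19 (a b σ₀ k : ℝ) (hσ₀ : σ₀ ≠ 0) :
    DetEqs Mcir (μcir a b) (σcir σ₀) (Y1cir k)
      (fun _ => (0 : Matrix (Fin 1) (Fin 1) ℝ)) (fun _ => (0 : ℝ)) (H1cir a b σ₀ k) ∧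
    DetEqs Mcir (μcir a b) (σcir σ₀) Y2cir
      (fun _ => (0 : Matrix (Fin 1) (Fin 1) ℝ)) (fun _ => (0 : ℝ))
      (fun _ => (0 : Fin 1 → ℝ)) ∧
    (∀ x ∈ Mcir,
      (∀ i, brY (Y1cir k) Y2cir x i = k * Y1cir k x i) ∧
      (∀ p q, brC (Y1cir k) Y2cir (fun _ => (0 : Matrix (Fin 1) (Fin 1) ℝ))
          (fun _ => (0 : Matrix (Fin 1) (Fin 1) ℝ)) x p q = 0) ∧
      (brTau (Y1cir k) Y2cir (fun _ => (0 : ℝ)) (fun _ => (0 : ℝ)) x = 0) ∧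
      (∀ α, brH (Y1cir k) Y2cir (fun _ => (0 : Matrix (Fin 1) (Fin 1) ℝ))
          (fun _ => (0 : Matrix (Fin 1) (Fin 1) ℝ)) (fun _ => (0 : ℝ)) (fun _ => (0 : ℝ))
          (H1cir a b σ₀ k) (fun _ => 0) x α = k * H1cir a b σ₀ k x α)) ∧
    (∃ k₁ : (Fin 2 → ℝ) → ℝ, ContDiffOn ℝ (⊤ : ℕ∞) k₁ Mcir ∧
      ∀ x ∈ Mcir, ∀ α, H1cir a b σ₀ k x α = ∑ i, σcir σ₀ x i α * pd i k₁ x) ∧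
    (∀ c₁ c₂ : ℝ,
      (∀ x ∈ Mcir, ∀ i, c₁ * Y1cir k x i + c₂ * Y2cir x i = 0) → c₁ = 0 ∧ c₂ = 0) := by
  have hop : IsOpen Mcir := isOpen_Mcir
  refine ⟨⟨?_, ?_⟩, ⟨?_, ?_⟩, ?_, ?_, ?_⟩
  · -- first determining equation for V₁
    intro x hx i
    have hp : 0 < x 0 := hx
    have hsp : 0 < Real.sqrt (x 0) := Real.sqrt_pos.2 hp
    fin_cases i
    · have hμ := pd_f0 (fun u => a * u + b) (a * 1) x
        (((hasDerivAt_id (x 0)).const_mul a).add_const b)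
      have hY := pdY1 k x hx
      have hYY := pdpdY1 k x hx
      simp only [Fin.zero_eta, Fin.mk_one, vfd, gen, μcir, σcir, Y1cir, H1cir, Fin.sum_univ_two, Fin.sum_univ_one,
        Matrix.cons_val_zero, Matrix.cons_val_one, Matrix.head_cons, Matrix.of_apply]
      rw [hμ.1, hμ.2, hY.1, hY.2, hYY]
      set s := Real.sqrt (x 0) with hs
      have hx0 : x 0 = s ^ 2 := (Real.sq_sqrt hp.le).symm
      rw [hx0]
      field_simp
      ring
    · simp only [Fin.zero_eta, Fin.mk_one, vfd, gen, μcir, σcir, Y1cir, H1cir, Fin.sum_univ_two, Fin.sum_univ_one,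
        Matrix.cons_val_zero, Matrix.cons_val_one, Matrix.head_cons, Matrix.of_apply,
        pd_const_fun]
      ring
  · -- second determining equation for V₁
    intro x hx i α
    have hp : 0 < x 0 := hx
    fin_cases i <;> fin_cases α
    · have hσ := pd_f0 (fun u => σ₀ * Real.sqrt u) (σ₀ * (1 / (2 * Real.sqrt (x 0)))) x
        ((Real.hasDerivAt_sqrt (ne_of_gt hp)).const_mul σ₀)
      have hY := pdY1 k x hx
      simp only [Fin.zero_eta, Fin.mk_one, vfd, μcir, σcir, Y1cir, Fin.sum_univ_two, Fin.sum_univ_one,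
        Matrix.cons_val_zero, Matrix.cons_val_one, Matrix.head_cons, Matrix.of_apply,
        Matrix.zero_apply]
      rw [hσ.1, hσ.2, hY.1, hY.2]
      ring
    · simp only [Fin.zero_eta, Fin.mk_one, vfd, μcir, σcir, Y1cir, Fin.sum_univ_two, Fin.sum_univ_one,
        Matrix.cons_val_zero, Matrix.cons_val_one, Matrix.head_cons, Matrix.of_apply,
        Matrix.zero_apply, pd_const_fun]
      ring
  · -- first determining equation for V₂
    intro x hx i
    have hμ := pd_f0 (fun u => a * u + b) (a * 1) x
      (((hasDerivAt_id (x 0)).const_mul a).add_const b)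
    fin_cases i <;>
      simp only [Fin.zero_eta, Fin.mk_one, vfd, gen, μcir, σcir, Y2cir, Fin.sum_univ_two, Fin.sum_univ_one,
        Matrix.cons_val_zero, Matrix.cons_val_one, Matrix.head_cons, Matrix.of_apply,
        Pi.zero_apply, pd_const_fun] <;>
      first
      | (rw [hμ.2]; ring)
      | ring
  · -- second determining equation for V₂
    intro x hx i α
    have hp : 0 < x 0 := hx
    have hσ := pd_f0 (fun u => σ₀ * Real.sqrt u) (σ₀ * (1 / (2 * Real.sqrt (x 0)))) x
      ((Real.hasDerivAt_sqrt (ne_of_gt hp)).const_mul σ₀)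
    fin_cases i <;> fin_cases α <;>
      simp only [Fin.zero_eta, Fin.mk_one, vfd, μcir, σcir, Y2cir, Fin.sum_univ_two, Fin.sum_univ_one,
        Matrix.cons_val_zero, Matrix.cons_val_one, Matrix.head_cons, Matrix.of_apply,
        Matrix.zero_apply, pd_const_fun] <;>
      first
      | (rw [hσ.2]; ring)
      | ring
  · -- bracket [V₁,V₂] = k V₁
    intro x hx
    have hp : 0 < x 0 := hx
    have hY := pdY1 k x hx
    have h8 : 8 * σ₀ * x 0 ≠ 0 := by positivity
    have hH := (pd_mul10
      (fun u => (a + 2 * k) / (2 * σ₀) + (σ₀ ^ 2 - 4 * b) / (8 * σ₀ * u))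
      (fun z => Real.exp (-k * z)) _ _ x
      (((hasDerivAt_const (x 0) (σ₀ ^ 2 - 4 * b)).div
        ((hasDerivAt_id (x 0)).const_mul (8 * σ₀)) h8).const_add ((a + 2 * k) / (2 * σ₀)))
      (hEcir k (x 1))).2
    refine ⟨?_, ?_, ?_, ?_⟩
    · intro i
      fin_cases i <;>
        simp only [Fin.zero_eta, Fin.mk_one, brY, vfd, Y1cir, Y2cir, Fin.sum_univ_two,
          Matrix.cons_val_zero, Matrix.cons_val_one, Matrix.head_cons, pd_const_fun]
      · rw [hY.1, hY.2]; ring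
      · ring
    · intro p q
      fin_cases p <;> fin_cases q <;>
        simp [brC, vfd, Y1cir, Y2cir, Fin.sum_univ_two, pd_const_fun]
    · simp [brTau, vfd, Y1cir, Y2cir, Fin.sum_univ_two, pd_const_fun]
    · intro α
      fin_cases α
      simp only [Fin.zero_eta, Fin.mk_one, brH, vfd, Y1cir, Y2cir, H1cir, Fin.sum_univ_two, Fin.sum_univ_one,
        Matrix.cons_val_zero, Matrix.cons_val_one, Matrix.head_cons,
        Matrix.zero_apply, Pi.zero_apply, pd_const_fun]
      rw [hH]
      ring
  · -- quasi Doob type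
    refine ⟨fun p => Real.exp (-k * p 1) *
      ((a + 2 * k) * Real.sqrt (p 0) / σ₀ ^ 2
        - (σ₀ ^ 2 - 4 * b) / (4 * σ₀ ^ 2 * Real.sqrt (p 0))), ?_, ?_⟩
    · intro p hp
      have hp0 : 0 < p 0 := hp
      have hsp : 0 < Real.sqrt (p 0) := Real.sqrt_pos.2 hp0
      have hproj0 : ContDiff ℝ (⊤ : ℕ∞) (fun q : Fin 2 → ℝ => q 0) :=
        (ContinuousLinearMap.proj (R := ℝ) (φ := fun _ : Fin 2 => ℝ) 0).contDiff
      have hproj1 : ContDiff ℝ (⊤ : ℕ∞) (fun q : Fin 2 → ℝ => q 1) :=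
        (ContinuousLinearMap.proj (R := ℝ) (φ := fun _ : Fin 2 => ℝ) 1).contDiff
      have hsqrt : ContDiffAt ℝ (⊤ : ℕ∞) (fun q : Fin 2 → ℝ => Real.sqrt (q 0)) p :=
        (Real.contDiffAt_sqrt (ne_of_gt hp0)).comp p hproj0.contDiffAt
      have hexp : ContDiffAt ℝ (⊤ : ℕ∞) (fun q : Fin 2 → ℝ => Real.exp (-k * q 1)) p :=
        (Real.contDiff_exp.comp (contDiff_const.mul hproj1)).contDiffAt
      have hden : ContDiffAt ℝ (⊤ : ℕ∞)
          (fun q : Fin 2 → ℝ => 4 * σ₀ ^ 2 * Real.sqrt (q 0)) p :=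
        contDiffAt_const.mul hsqrt
      have hdenne : 4 * σ₀ ^ 2 * Real.sqrt (p 0) ≠ 0 := by positivity
      exact (hexp.mul (((contDiffAt_const.mul hsqrt).div_const _).sub
        (contDiffAt_const.div hden hdenne))).contDiffWithinAt
    · intro x hx α
      have hp : 0 < x 0 := hx
      have hsp : 0 < Real.sqrt (x 0) := Real.sqrt_pos.2 hp
      have hd1 : HasDerivAt (fun u : ℝ => (a + 2 * k) * Real.sqrt u / σ₀ ^ 2)
          ((a + 2 * k) * (1 / (2 * Real.sqrt (x 0))) / σ₀ ^ 2) (x 0) :=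
        ((Real.hasDerivAt_sqrt (ne_of_gt hp)).const_mul (a + 2 * k)).div_const _
      have h4 : 4 * σ₀ ^ 2 * Real.sqrt (x 0) ≠ 0 := by positivity
      have hd2 : HasDerivAt (fun u : ℝ => (σ₀ ^ 2 - 4 * b) / (4 * σ₀ ^ 2 * Real.sqrt u))
          ((0 * (4 * σ₀ ^ 2 * Real.sqrt (x 0)) - (σ₀ ^ 2 - 4 * b) *
            (4 * σ₀ ^ 2 * (1 / (2 * Real.sqrt (x 0))))) / (4 * σ₀ ^ 2 * Real.sqrt (x 0)) ^ 2)
          (x 0) :=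
        (hasDerivAt_const (x 0) (σ₀ ^ 2 - 4 * b)).div
          ((Real.hasDerivAt_sqrt (ne_of_gt hp)).const_mul (4 * σ₀ ^ 2)) h4
      have hk := (pd_mul10
        (fun u => (a + 2 * k) * Real.sqrt u / σ₀ ^ 2
          - (σ₀ ^ 2 - 4 * b) / (4 * σ₀ ^ 2 * Real.sqrt u))
        (fun z => Real.exp (-k * z)) _ _ x (hd1.sub hd2) (hEcir k (x 1))).1
      fin_cases α
      simp only [Fin.zero_eta, Fin.mk_one, σcir, H1cir, Fin.sum_univ_two, Matrix.cons_val_zero, Matrix.cons_val_one,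
        Matrix.head_cons, Matrix.of_apply]
      rw [hk]
      set s := Real.sqrt (x 0) with hs
      have hx0 : x 0 = s ^ 2 := (Real.sq_sqrt hp.le).symm
      rw [hx0]
      field_simp
      ring
  · -- linear independence
    intro c₁ c₂ h
    have h1 : (![1, 0] : Fin 2 → ℝ) ∈ Mcir := by
      show (0:ℝ) < ![(1:ℝ), 0] 0; norm_num
    have e0 := h ![1, 0] h1 0
    have e1 := h ![1, 0] h1 1
    simp [Y1cir, Y2cir] at e0 e1
    exact ⟨e0, e1⟩
end
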